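/- Let x, x′ ∈ {−1, +1}ⁿ, let M be a real n×n matrix, and let λ ≥ 0. Suppose the operator norms satisfy ‖M − x xᵀ‖ ≤ λ·n and ‖M − x′ (x′)ᵀ‖ ≤ λ·n. Then n² − ⟨x, x′⟩² ≤ 2·λ·n². -/

import Mathlib

set_option autoImplicit false

open Matrix

/-- Let `x, x' ∈ {±1}ⁿ`, `M` a real `n×n` matrix, `λ ≥ 0`. If the
spectral (ℓ²-operator) norms satisfy `‖M − xxᵀ‖ ≤ λn` and `‖M − x'(x')ᵀ‖ ≤ λn`, then
`n² − ⟨x, x'⟩² ≤ 2λn²`. -/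
theorem stmt_14 (n : ℕ) (x x' : Fin n → ℝ)
    (hx : ∀ i, x i = 1 ∨ x i = -1) (hx' : ∀ i, x' i = 1 ∨ x' i = -1)
    (M : Matrix (Fin n) (Fin n) ℝ) (lam : ℝ) (hlam : 0 ≤ lam)
    (h1 : ‖Matrix.toEuclideanCLM (𝕜 := ℝ) (M - vecMulVec x x)‖ ≤ lam * n)
    (h2 : ‖Matrix.toEuclideanCLM (𝕜 := ℝ) (M - vecMulVec x' x')‖ ≤ lam * n) :
    (n : ℝ) ^ 2 - (∑ i, x i * x' i) ^ 2 ≤ 2 * lam * n ^ 2 := by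
  set A : Matrix (Fin n) (Fin n) ℝ := (M - vecMulVec x x) - (M - vecMulVec x' x') with hA
  set T := Matrix.toEuclideanCLM (𝕜 := ℝ) A with hT
  have hTnorm : ‖T‖ ≤ 2 * lam * n := by
    rw [hT, hA, map_sub]
    calc ‖_ - _‖ ≤ ‖Matrix.toEuclideanCLM (𝕜 := ℝ) (M - vecMulVec x x)‖
        + ‖Matrix.toEuclideanCLM (𝕜 := ℝ) (M - vecMulVec x' x')‖ := norm_sub_le _ _
      _ ≤ lam * n + lam * n := add_le_add h1 h2
      _ = 2 * lam * n := by ring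
  set v : EuclideanSpace ℝ (Fin n) := (WithLp.equiv 2 (Fin n → ℝ)).symm x' with hv
  have hx'sq : ∀ i, x' i * x' i = 1 := fun i => by rcases hx' i with h | h <;> simp [h]
  have hvnorm : ‖v‖ ^ 2 = n := by
    rw [← real_inner_self_eq_norm_sq]
    simp only [hv, WithLp.equiv_symm_apply, PiLp.inner_apply, PiLp.toLp_apply, RCLike.inner_apply,
      conj_trivial, hx'sq]
    simp
  have hTv : T v = (WithLp.equiv 2 (Fin n → ℝ)).symm (A *ᵥ x') := by
    rw [hT, hv, WithLp.equiv_symm_apply, Matrix.toEuclideanCLM_toLp]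
  have hmv : ∀ i, (A *ᵥ x') i = (n : ℝ) * x' i - (∑ j, x j * x' j) * x i := by
    intro i
    have hAij : ∀ j, A i j = x' i * x' j - x i * x j := fun j => by
      simp [hA, Matrix.sub_apply, Matrix.vecMulVec_apply]
    calc (A *ᵥ x') i = ∑ j, (x' i * x' j - x i * x j) * x' j := by
          simp [Matrix.mulVec, dotProduct, hAij]
      _ = (∑ j, x' i * (x' j * x' j)) - ∑ j, x i * (x j * x' j) := by
          rw [← Finset.sum_sub_distrib]
          exact Finset.sum_congr rfl fun j _ => by ring
      _ = (n : ℝ) * x' i - (∑ j, x j * x' j) * x i := by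
          simp only [hx'sq, mul_one, Finset.sum_const, Finset.card_univ,
            Fintype.card_fin, nsmul_eq_mul, ← Finset.mul_sum]
          ring
  have hinner : (inner ℝ v (T v) : ℝ) = (n : ℝ) ^ 2 - (∑ i, x i * x' i) ^ 2 := by
    rw [hTv]
    simp only [hv, PiLp.inner_apply, WithLp.equiv_symm_apply, PiLp.toLp_apply, RCLike.inner_apply,
      conj_trivial]
    rw [Finset.sum_congr rfl fun i _ => mul_comm ((A *ᵥ x') i) (x' i)]
    calc ∑ i, x' i * (A *ᵥ x') i
        = (∑ i, (n : ℝ) * (x' i * x' i)) - ∑ i, (∑ j, x j * x' j) * (x i * x' i) := by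
          rw [← Finset.sum_sub_distrib]
          refine Finset.sum_congr rfl fun i _ => ?_
          rw [hmv i]; ring
      _ = (n : ℝ) ^ 2 - (∑ i, x i * x' i) ^ 2 := by
          simp only [hx'sq, mul_one, Finset.sum_const, Finset.card_univ,
            Fintype.card_fin, nsmul_eq_mul, ← Finset.mul_sum]
          ring
  calc (n : ℝ) ^ 2 - (∑ i, x i * x' i) ^ 2 = (inner ℝ v (T v) : ℝ) := hinner.symm
    _ ≤ ‖v‖ * ‖T v‖ := real_inner_le_norm _ _
    _ ≤ ‖v‖ * (‖T‖ * ‖v‖) :=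
        mul_le_mul_of_nonneg_left (T.le_opNorm v) (norm_nonneg _)
    _ = ‖T‖ * ‖v‖ ^ 2 := by ring
    _ ≤ (2 * lam * n) * n := by
        rw [hvnorm]
        exact mul_le_mul_of_nonneg_right hTnorm (Nat.cast_nonneg n)
    _ = 2 * lam * n ^ 2 := by ring
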